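/- Let G be an acyclic grade graph and let γ, γ' be grade contexts. If γ + γ'·G ≤ γ' (pointwise), then γ·G* ≤ γ' (pointwise). -/

import Mathlib

open scoped Classical

/-- Weight of a path (nonempty list of vertices) in a grade graph. -/
def pathWeight {V R : Type*} [Semiring R] (G : V → V → R) : List V → R
  | [] => 1
  | [_] => 1
  | x :: y :: p => G x y * pathWeight G (y :: p)

/-- The set of non-source nodes of a grade graph. -/
def Nodes {V R : Type*} [Zero R] (G : V → V → R) : Set V := {y | ∃ x, G x y ≠ 0}

/-- Paths from `x` to `y`: nonempty lists with head `x` and last element `y`. -/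
def PathsBtw {V : Type*} (x y : V) : Set (List V) :=
  {p | p ≠ [] ∧ p.head? = some x ∧ p.getLast? = some y}

/-- A cycle: a path with more than one node and equal endpoints. -/
def IsCyclePath {V : Type*} (p : List V) : Prop := 1 < p.length ∧ p.head? = p.getLast?

/-- A grade graph is acyclic if every cycle has weight zero. -/
def Acyclic {V R : Type*} [Semiring R] (G : V → V → R) : Prop :=
  ∀ p : List V, IsCyclePath p → pathWeight G p = 0

/-- Reflexive and transitive closure of a grade graph:
`G*(x,y) = Σ_{p ∈ Paths(x,y)} w_G(p)`. -/
noncomputable def gstar {V R : Type*} [Semiring R] (G : V → V → R) (x y : V) : R :=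
  ∑ᶠ p ∈ PathsBtw x y, pathWeight G p

/-- Grade matrix multiplication. -/
noncomputable def matMul {V R : Type*} [Semiring R] (M₁ M₂ : V → V → R) (x y : V) : R :=
  ∑ᶠ z, M₁ x z * M₂ z y

/-- Identity grade matrix. -/
noncomputable def matId {V R : Type*} [Semiring R] (x y : V) : R := if x = y then 1 else 0

/-- `n`-fold product of a grade graph with itself, with `G⁰ = I`. -/
noncomputable def matPow {V R : Type*} [Semiring R] (G : V → V → R) : ℕ → V → V → R
  | 0 => matId
  | n + 1 => matMul G (matPow G n)

/-- Multiplication of a grade context by a grade matrix: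
`(γ·M)(x) = Σ_y γ(y)·M(y,x)`. -/
noncomputable def ctxMul {V R : Type*} [Semiring R] (γ : V → R) (M : V → V → R) (x : V) : R :=
  ∑ᶠ y, γ y * M y x

/-- A grade matrix: every row has finite support. -/
def RowFinite {V R : Type*} [Zero R] (M : V → V → R) : Prop :=
  ∀ x, {y | M x y ≠ 0}.Finite

namespace GradeAux

variable {V R : Type*} [Semiring R]

@[simp] lemma pw_nil (G : V → V → R) : pathWeight G ([] : List V) = 1 := rfl
@[simp] lemma pw_single (G : V → V → R) (v : V) : pathWeight G [v] = 1 := rfl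
@[simp] lemma pw_cons₂ (G : V → V → R) (x y : V) (p : List V) :
    pathWeight G (x :: y :: p) = G x y * pathWeight G (y :: p) := rfl

lemma pw_append (G : V → V → R) : ∀ (p : List V) (v : V) (q : List V),
    pathWeight G (p ++ v :: q) = pathWeight G (p ++ [v]) * pathWeight G (v :: q)
  | [], v, q => by simp
  | [a], v, q => by simp
  | a :: b :: p, v, q => by
    have ih := pw_append G (b :: p) v q
    simp only [List.cons_append] at ih ⊢
    rw [pw_cons₂, ih, pw_cons₂, mul_assoc]

lemma pw_concat (G : V → V → R) {q : List V} {z : V} (hz : q.getLast? = some z) (x : V) :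
    pathWeight G (q ++ [x]) = pathWeight G q * G z x := by
  have hq : q.dropLast ++ [z] = q := List.dropLast_append_getLast? z hz
  calc pathWeight G (q ++ [x]) = pathWeight G (q.dropLast ++ z :: [x]) := by rw [← hq]; simp
    _ = pathWeight G (q.dropLast ++ [z]) * pathWeight G [z, x] := pw_append G _ _ _
    _ = pathWeight G q * G z x := by rw [hq]; simp

lemma pw_zero_of_not_nodup {G : V → V → R} (hacyc : Acyclic G) :
    ∀ (p : List V), ¬ p.Nodup → pathWeight G p = 0
  | [], h => absurd List.nodup_nil h
  | a :: q, h => by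
    by_cases ha : a ∈ q
    · obtain ⟨s, t, rfl⟩ := List.append_of_mem ha
      have : a :: (s ++ a :: t) = (a :: s) ++ a :: t := by simp
      rw [this, pw_append]
      have hc : pathWeight G ((a :: s) ++ [a]) = 0 := by
        refine hacyc _ ⟨?_, ?_⟩
        · simp [IsCyclePath]
        · show (a :: (s ++ [a])).head? = _
          rw [List.head?_cons]
          exact List.getLast?_concat.symm
      rw [hc, zero_mul]
    · have hq : ¬ q.Nodup := by
        intro hn; exact h (List.nodup_cons.2 ⟨ha, hn⟩)
      match q, hq with
      | [], hq => exact absurd List.nodup_nil hq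
      | b :: q', hq => rw [pw_cons₂, pw_zero_of_not_nodup hacyc _ hq, mul_zero]

end GradeAux

section Part2
namespace GradeAux

variable {V R : Type*} [Semiring R] (G : V → V → R)

noncomputable def eS (hG : {q : V × V | G q.1 q.2 ≠ 0}.Finite) : Finset V :=
  hG.toFinset.image Prod.fst ∪ hG.toFinset.image Prod.snd

lemma fst_mem_eS (hG : {q : V × V | G q.1 q.2 ≠ 0}.Finite) {z x : V} (h : G z x ≠ 0) : z ∈ eS G hG := by
  apply Finset.mem_union_left
  exact Finset.mem_image.2 ⟨(z, x), hG.mem_toFinset.2 h, rfl⟩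

lemma snd_mem_eS (hG : {q : V × V | G q.1 q.2 ≠ 0}.Finite) {z x : V} (h : G z x ≠ 0) : x ∈ eS G hG := by
  apply Finset.mem_union_right
  exact Finset.mem_image.2 ⟨(z, x), hG.mem_toFinset.2 h, rfl⟩

lemma mem_eS_of_pw (hG : {q : V × V | G q.1 q.2 ≠ 0}.Finite) : ∀ (p : List V), pathWeight G p ≠ 0 → 2 ≤ p.length →
    ∀ a ∈ p, a ∈ eS G hG
  | x :: y :: q, hpw, _, a, ha => by
    have hxy : G x y ≠ 0 := by
      intro h0; exact hpw (by rw [pw_cons₂, h0, zero_mul])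
    rcases List.mem_cons.1 ha with rfl | ha
    · exact fst_mem_eS G hG hxy
    · match q, ha with
      | [], ha => rw [List.mem_singleton] at ha; subst ha; exact snd_mem_eS G hG hxy
      | c :: q', ha =>
        have hpw' : pathWeight G (y :: c :: q') ≠ 0 := by
          intro h0; exact hpw (by rw [pw_cons₂, h0, mul_zero])
        exact mem_eS_of_pw hG (y :: c :: q') hpw' (by simp) a ha

lemma length_le_of_pw_ne (hG : {q : V × V | G q.1 q.2 ≠ 0}.Finite) (hacyc : Acyclic G) {p : List V} (hp : pathWeight G p ≠ 0) :
    p.length ≤ (eS G hG).card + 1 := by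
  classical
  rcases le_or_gt p.length 1 with h1 | h1
  · omega
  · have hnd : p.Nodup := by
      by_contra hnd
      exact hp (pw_zero_of_not_nodup hacyc p hnd)
    have hsub : p.toFinset ⊆ eS G hG := by
      intro a ha
      exact mem_eS_of_pw G hG p hp (by omega) a (List.mem_toFinset.1 ha)
    have := Finset.card_le_card hsub
    rw [List.toFinset_card_of_nodup hnd] at this
    omega

def PSet (C : ℕ → Prop) (y x : V) : Set (List V) :=
  {p | p ≠ [] ∧ p.head? = some y ∧ p.getLast? = some x ∧ pathWeight G p ≠ 0 ∧ C p.length}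

lemma PSet_finite (hG : {q : V × V | G q.1 q.2 ≠ 0}.Finite) (hacyc : Acyclic G) (C : ℕ → Prop) (y x : V) : (PSet G C y x).Finite := by
  classical
  set T : Finset V := insert x (eS G hG) with hT
  have : PSet G C y x ⊆
      (List.map (Subtype.val : ↥(↑T : Set V) → V)) ''
        {l : List ↥(↑T : Set V) | l.length ≤ (eS G hG).card + 1} := by
    rintro p ⟨hne, hhd, hlast, hpw, _⟩
    have hall : ∀ a ∈ p, a ∈ (↑T : Set V) := by
      intro a ha
      rcases le_or_gt 2 p.length with h2 | h2
      · exact Finset.mem_coe.2 (Finset.mem_insert_of_mem (mem_eS_of_pw G hG p hpw h2 a ha))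
      · match p, hne, h2 with
        | [b], _, _ =>
          rw [List.mem_singleton] at ha; subst ha
          simp only [List.getLast?_singleton, Option.some.injEq] at hlast
          subst hlast
          exact Finset.mem_coe.2 (Finset.mem_insert_self _ _)
    refine ⟨p.attach.map (fun a => ⟨a.1, hall a.1 a.2⟩), ?_, ?_⟩
    · simp only [Set.mem_setOf_eq, List.length_map, List.length_attach]
      exact length_le_of_pw_ne G hG hacyc hpw
    · rw [List.map_map]
      exact (List.attach_map_val (l := p) (f := fun a => a)).trans (List.map_id p)
  exact Set.Finite.subset (Set.Finite.image _ (List.finite_length_le _ _)) this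

noncomputable def PFin (hG : {q : V × V | G q.1 q.2 ≠ 0}.Finite) (hacyc : Acyclic G) (C : ℕ → Prop) (y x : V) : Finset (List V) :=
  (PSet_finite G hG hacyc C y x).toFinset

lemma mem_PFin (hG : {q : V × V | G q.1 q.2 ≠ 0}.Finite) (hacyc : Acyclic G) {C : ℕ → Prop} {y x : V} {p : List V} :
    p ∈ PFin G hG hacyc C y x ↔
      p ≠ [] ∧ p.head? = some y ∧ p.getLast? = some x ∧ pathWeight G p ≠ 0 ∧ C p.length :=
  (Set.Finite.mem_toFinset _)

noncomputable def GS (hG : {q : V × V | G q.1 q.2 ≠ 0}.Finite) (hacyc : Acyclic G) (C : ℕ → Prop) (y x : V) : R :=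
  ∑ p ∈ PFin G hG hacyc C y x, pathWeight G p

end GradeAux
end Part2

namespace GradeAux

variable {V R : Type*} [Semiring R] (G : V → V → R)
  (hG : {q : V × V | G q.1 q.2 ≠ 0}.Finite) (hacyc : Acyclic G)

lemma GS_decomp (C : ℕ → Prop) (y x : V) :
    GS G hG hacyc C y x
      = (if y = x ∧ C 1 then (1:R) else 0)
        + ∑ z ∈ eS G hG, GS G hG hacyc (fun n => C (n+1)) y z * G z x := by
  classical
  let P : Finset (List V) := PFin G hG hacyc C y x
  let P' : V → Finset (List V) := fun z => PFin G hG hacyc (fun n => C (n+1)) y z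
  let A : Finset (List V) := (eS G hG).biUnion (fun z => (P' z).image (fun q => q ++ [x]))
  let P₀ : Finset (List V) := if y = x ∧ C 1 then {[x]} else ∅
  have memP : ∀ p : List V, p ∈ P ↔
      p ≠ [] ∧ p.head? = some y ∧ p.getLast? = some x ∧ pathWeight G p ≠ 0 ∧ C p.length :=
    fun p => mem_PFin G hG hacyc
  have memP' : ∀ (z : V) (q : List V), q ∈ P' z ↔
      q ≠ [] ∧ q.head? = some y ∧ q.getLast? = some z ∧ pathWeight G q ≠ 0 ∧ C (q.length + 1) :=
    fun z q => mem_PFin G hG hacyc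
  have memA : ∀ p : List V, p ∈ A ↔ ∃ z ∈ eS G hG, ∃ q ∈ P' z, q ++ [x] = p := by
    intro p
    constructor
    · intro hp
      obtain ⟨z, hz, hq⟩ := Finset.mem_biUnion.1 hp
      obtain ⟨q, hq, he⟩ := Finset.mem_image.1 hq
      exact ⟨z, hz, q, hq, he⟩
    · rintro ⟨z, hz, q, hq, he⟩
      exact Finset.mem_biUnion.2 ⟨z, hz, Finset.mem_image.2 ⟨q, hq, he⟩⟩
  have hsub : P ⊆ P₀ ∪ A := by
    intro p hp
    rw [memP] at hp
    obtain ⟨hne, hhd, hlast, hpw, hC⟩ := hp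
    rcases p with _ | ⟨a, _ | ⟨b, r⟩⟩
    · exact absurd rfl hne
    · simp only [List.head?_cons, Option.some.injEq] at hhd
      simp only [List.getLast?_singleton, Option.some.injEq] at hlast
      apply Finset.mem_union_left
      have : P₀ = {[x]} := if_pos ⟨hhd.symm.trans hlast, hC⟩
      rw [this, Finset.mem_singleton, hlast]
    · have hne' : (a :: b :: r : List V) ≠ [] := by simp
      have hqx : (a :: b :: r).dropLast ++ [x] = a :: b :: r :=
        List.dropLast_append_getLast? x hlast
      set q : List V := (a :: b :: r).dropLast with hqdef
      have hqne : q ≠ [] := by rw [hqdef, List.dropLast_cons₂]; simp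
      have hql : q.getLast? = some (q.getLast hqne) := List.getLast?_eq_getLast hqne
      set z : V := q.getLast hqne with hzdef
      have hfact : pathWeight G (a :: b :: r) = pathWeight G q * G z x := by
        rw [← hqx]; exact pw_concat G hql x
      have hpwq : pathWeight G q ≠ 0 := by
        intro h0; exact hpw (by rw [hfact, h0, zero_mul])
      have hGzx : G z x ≠ 0 := by
        intro h0; exact hpw (by rw [hfact, h0, mul_zero])
      have hlen : q.length + 1 = (a :: b :: r).length := by
        rw [← hqx, List.length_append, List.length_singleton]
      have hqhd : q.head? = some y := by
        have h1 : q.head? = (a :: b :: r).head? := by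
          rw [hqdef, List.dropLast_cons₂, List.head?_cons, List.head?_cons]
        rw [h1, hhd]
      have hq : q ∈ P' z := (memP' z q).2 ⟨hqne, hqhd, hql, hpwq, by rw [hlen]; exact hC⟩
      exact Finset.mem_union_right _ ((memA _).2 ⟨z, fst_mem_eS G hG hGzx, q, hq, hqx⟩)
  have hzero : ∀ p ∈ P₀ ∪ A, p ∉ P → pathWeight G p = 0 := by
    intro p hp hnp
    by_contra hpw0
    apply hnp
    rcases Finset.mem_union.1 hp with hp0 | hpA
    · by_cases hyx : y = x ∧ C 1
      · have : P₀ = {[x]} := if_pos hyx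
        rw [this, Finset.mem_singleton] at hp0
        subst hp0
        rw [memP]
        exact ⟨List.cons_ne_nil _ _, by rw [List.head?_cons, hyx.1], by simp, hpw0,
          by simpa using hyx.2⟩
      · have : P₀ = ∅ := if_neg hyx
        rw [this] at hp0; exact absurd hp0 (Finset.notMem_empty _)
    · obtain ⟨z, hz, q, hq, rfl⟩ := (memA p).1 hpA
      rw [memP' z q] at hq
      obtain ⟨hqne, hqhd, hqlast, _, hqC⟩ := hq
      rw [memP]
      refine ⟨by simp, ?_, List.getLast?_concat, hpw0, ?_⟩
      · rw [List.head?_append_of_ne_nil _ hqne]; exact hqhd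
      · rw [List.length_append, List.length_singleton]; exact hqC
  have hdisj : Disjoint P₀ A := by
    rw [Finset.disjoint_left]
    intro p hp0 hpA
    have hp1 : p.length = 1 := by
      by_cases hyx : y = x ∧ C 1
      · have : P₀ = {[x]} := if_pos hyx
        rw [this, Finset.mem_singleton] at hp0; subst hp0; rfl
      · have : P₀ = ∅ := if_neg hyx
        rw [this] at hp0; exact absurd hp0 (Finset.notMem_empty _)
    obtain ⟨z, hz, q, hq, rfl⟩ := (memA p).1 hpA
    rw [memP' z q] at hq
    rw [List.length_append, List.length_singleton] at hp1
    exact hq.1 (List.length_eq_zero_iff.1 (by omega))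
  have hd2 : (↑(eS G hG) : Set V).PairwiseDisjoint
      (fun z => (P' z).image (fun q => q ++ [x])) := by
    intro z₁ _ z₂ _ hzz
    rw [Function.onFun, Finset.disjoint_left]
    intro p h1 h2
    obtain ⟨q₁, hq₁, he₁⟩ := Finset.mem_image.1 h1
    obtain ⟨q₂, hq₂, he₂⟩ := Finset.mem_image.1 h2
    have hq12 : q₂ = q₁ := List.append_cancel_right (he₂.trans he₁.symm)
    subst hq12
    rw [memP' z₁ q₂] at hq₁
    rw [memP' z₂ q₂] at hq₂
    exact hzz (Option.some.inj ((hq₁.2.2.1).symm.trans hq₂.2.2.1))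
  calc GS G hG hacyc C y x = ∑ p ∈ P, pathWeight G p := rfl
    _ = ∑ p ∈ P₀ ∪ A, pathWeight G p := Finset.sum_subset hsub hzero
    _ = ∑ p ∈ P₀, pathWeight G p + ∑ p ∈ A, pathWeight G p := Finset.sum_union hdisj
    _ = (if y = x ∧ C 1 then (1:R) else 0)
        + ∑ z ∈ eS G hG, GS G hG hacyc (fun n => C (n+1)) y z * G z x := by
      congr 1
      · by_cases hyx : y = x ∧ C 1
        · have : P₀ = {[x]} := if_pos hyx
          rw [this, if_pos hyx, Finset.sum_singleton, pw_single]
        · have : P₀ = ∅ := if_neg hyx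
          rw [this, if_neg hyx, Finset.sum_empty]
      · rw [show A = (eS G hG).biUnion (fun z => (P' z).image (fun q => q ++ [x])) from rfl,
          Finset.sum_biUnion hd2]
        refine Finset.sum_congr rfl fun z _ => ?_
        rw [Finset.sum_image (fun q₁ _ q₂ _ h => List.append_cancel_right h)]
        rw [GS, Finset.sum_mul]
        refine Finset.sum_congr rfl fun q hq => ?_
        rw [memP' z q] at hq
        exact pw_concat G hq.2.2.1 x

end GradeAux

noncomputable def matId' {V R : Type*} [Semiring R] (x y : V) : R := if x = y then 1 else 0

namespace GradeAux

variable {V R : Type*} [Semiring R] (G : V → V → R)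
  (hG : {q : V × V | G q.1 q.2 ≠ 0}.Finite) (hacyc : Acyclic G)

lemma GS_congr {C C' : ℕ → Prop} (h : ∀ n, C n ↔ C' n) (y x : V) :
    GS G hG hacyc C y x = GS G hG hacyc C' y x := by
  have hCC : C = C' := funext fun n => propext (h n)
  rw [hCC]

lemma GS_vanish {C : ℕ → Prop} (h : ∀ n, 1 ≤ n → ¬ C n) (y x : V) :
    GS G hG hacyc C y x = 0 := by
  refine Finset.sum_eq_zero fun p hp => ?_
  rw [mem_PFin] at hp
  exact absurd hp.2.2.2.2 (h _ (List.length_pos_iff.2 hp.1))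

lemma GS_le_zero (y x : V) : GS G hG hacyc (· ≤ 0) y x = 0 :=
  GS_vanish G hG hacyc (fun n hn h0 => by omega) y x

lemma GS_le_succ (k : ℕ) (y x : V) :
    GS G hG hacyc (· ≤ k+1) y x
      = matId' y x + ∑ z ∈ eS G hG, GS G hG hacyc (· ≤ k) y z * G z x := by
  rw [GS_decomp]
  congr 1
  · rw [matId']
    by_cases hyx : y = x
    · rw [if_pos ⟨hyx, by omega⟩, if_pos hyx]
    · rw [if_neg (fun hc => hyx hc.1), if_neg hyx]
  · exact Finset.sum_congr rfl fun z _ => by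
      rw [GS_congr G hG hacyc (C := fun n => n + 1 ≤ k + 1) (C' := fun n => n ≤ k)
        (fun n => by omega)]

lemma GS_exact_one (y x : V) : GS G hG hacyc (· = 1) y x = matId' y x := by
  rw [GS_decomp]
  have h2 : ∀ z ∈ eS G hG, GS G hG hacyc (fun n => n + 1 = 1) y z * G z x = 0 :=
    fun z _ => by rw [GS_vanish G hG hacyc (fun n hn h0 => by omega), zero_mul]
  rw [Finset.sum_eq_zero h2, add_zero, matId']
  by_cases hyx : y = x
  · rw [if_pos ⟨hyx, rfl⟩, if_pos hyx]
  · rw [if_neg (fun hc => hyx hc.1), if_neg hyx]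

lemma GS_exact_succ (k : ℕ) (y x : V) :
    GS G hG hacyc (· = k+2) y x
      = ∑ z ∈ eS G hG, GS G hG hacyc (· = k+1) y z * G z x := by
  rw [GS_decomp, if_neg (fun hc : y = x ∧ (1:ℕ) = k + 2 => absurd hc.2 (by omega)), zero_add]
  exact Finset.sum_congr rfl fun z _ => by
    rw [GS_congr G hG hacyc (C := fun n => n + 1 = k + 2) (C' := fun n => n = k + 1)
      (fun n => by omega)]

lemma GS_exact_vanish {k : ℕ} (hk : (eS G hG).card + 1 < k + 1) (y x : V) :
    GS G hG hacyc (· = k+1) y x = 0 := by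
  refine Finset.sum_eq_zero fun p hp => ?_
  rw [mem_PFin] at hp
  have := length_le_of_pw_ne G hG hacyc hp.2.2.2.1
  rw [hp.2.2.2.2] at this
  omega

lemma gstar_eq' (y x : V) :
    (∑ᶠ p ∈ PathsBtw y x, pathWeight G p)
      = GS G hG hacyc (· ≤ (eS G hG).card + 1) y x := by
  rw [GS]
  apply finsum_mem_eq_sum_of_inter_support_eq
  ext p
  simp only [Set.mem_inter_iff, Function.mem_support, Finset.coe_sort_coe, Finset.mem_coe,
    mem_PFin, PathsBtw, Set.mem_setOf_eq]
  constructor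
  · rintro ⟨⟨h1, h2, h3⟩, h4⟩
    exact ⟨⟨h1, h2, h3, h4, length_le_of_pw_ne G hG hacyc h4⟩, h4⟩
  · rintro ⟨⟨h1, h2, h3, h4, h5⟩, h6⟩
    exact ⟨⟨h1, h2, h3⟩, h6⟩

variable [PartialOrder R]

lemma sum_le_sum' (hadd : ∀ a b c d : R, a ≤ b → c ≤ d → a + c ≤ b + d)
    {ι : Type*} (s : Finset ι) (f g : ι → R) (h : ∀ i ∈ s, f i ≤ g i) :
    ∑ i ∈ s, f i ≤ ∑ i ∈ s, g i := by
  classical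
  induction s using Finset.induction_on with
  | empty => simp
  | @insert a s ha ih =>
    rw [Finset.sum_insert ha, Finset.sum_insert ha]
    exact hadd _ _ _ _ (h a (Finset.mem_insert_self _ _))
      (ih fun i hi => h i (Finset.mem_insert_of_mem hi))

lemma sum_matId' (δ : V → R) (T : Finset V) (hT : ∀ v, δ v ≠ 0 → v ∈ T) (x : V) :
    ∑ y ∈ T, δ y * matId' y x = δ x := by
  classical
  by_cases hx : x ∈ T
  · rw [Finset.sum_eq_single x]
    · rw [matId', if_pos rfl, mul_one]
    · intro y _ hyx; rw [matId', if_neg hyx, mul_zero]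
    · intro hxx; exact absurd hx hxx
  · have hδ : δ x = 0 := by
      by_contra hc; exact hx (hT x hc)
    rw [hδ]
    exact Finset.sum_eq_zero fun y hy => by
      rw [matId', if_neg (fun hc : y = x => hx (hc ▸ hy)), mul_zero]

lemma sum_mul_sum_comm {ι κ : Type*} (T : Finset ι) (U : Finset κ) (δ : ι → R)
    (A : ι → κ → R) (B : κ → R) :
    ∑ y ∈ T, δ y * (∑ z ∈ U, A y z * B z) = ∑ z ∈ U, (∑ y ∈ T, δ y * A y z) * B z := by
  simp_rw [Finset.mul_sum, Finset.sum_mul, ← mul_assoc]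
  exact Finset.sum_comm

end GradeAux

namespace GradeAux

variable {V R : Type*} [Semiring R] (G : V → V → R)
  (hG : {q : V × V | G q.1 q.2 ≠ 0}.Finite) (hacyc : Acyclic G)

lemma gstar_eq (y x : V) :
    gstar G y x = GS G hG hacyc (· ≤ (eS G hG).card + 1) y x :=
  gstar_eq' G hG hacyc y x

end GradeAux


/-- For an acyclic grade graph `G` and grade contexts `γ, γ'`:
if `γ + γ'·G ≤ γ'` pointwise, then `γ·G* ≤ γ'` pointwise. -/
theorem gstar_le_of_prefixed_point {V R : Type*} [Semiring R] [PartialOrder R]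
    (hadd : ∀ a b c d : R, a ≤ b → c ≤ d → a + c ≤ b + d)
    (hmul : ∀ a b c d : R, a ≤ b → c ≤ d → a * c ≤ b * d)
    (hzero : ∀ r : R, r ≤ 0 → r = 0)
    (G : V → V → R) (hG : {q : V × V | G q.1 q.2 ≠ 0}.Finite)
    (hacyc : Acyclic G)
    (γ γ' : V → R) (hγ : {x | γ x ≠ 0}.Finite) (hγ' : {x | γ' x ≠ 0}.Finite)
    (h : ∀ x, γ x + ctxMul γ' G x ≤ γ' x) :
    ∀ x, ctxMul γ (gstar G) x ≤ γ' x := by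
  classical
  set S : Finset V := GradeAux.eS G hG with hS
  set K : ℕ := S.card + 1 with hK
  set Φ : ℕ → V → R :=
    fun k x => ∑ y ∈ hγ.toFinset, γ y * GradeAux.GS G hG hacyc (· ≤ k) y x with hΦ
  set ψ : ℕ → V → R :=
    fun k x => ∑ y ∈ hγ'.toFinset, γ' y * GradeAux.GS G hG hacyc (· = k+1) y x with hψ
  have hΦ0 : ∀ x, Φ 0 x = 0 := fun x => Finset.sum_eq_zero fun y _ => by
    rw [GradeAux.GS_le_zero, mul_zero]
  have hψ0 : ∀ x, ψ 0 x = γ' x := by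
    intro x
    calc ψ 0 x = ∑ y ∈ hγ'.toFinset, γ' y * GradeAux.GS G hG hacyc (· = 1) y x :=
          Finset.sum_congr rfl fun y _ => by
            rw [GradeAux.GS_congr G hG hacyc (C := fun n => n = 0+1) (C' := fun n => n = 1)
              (fun n => by omega)]
      _ = ∑ y ∈ hγ'.toFinset, γ' y * matId' y x :=
          Finset.sum_congr rfl fun y _ => by rw [GradeAux.GS_exact_one]
      _ = γ' x := GradeAux.sum_matId' γ' hγ'.toFinset (fun v hv => hγ'.mem_toFinset.2 hv) x
  have hΦs : ∀ k x, Φ (k+1) x = γ x + ∑ z ∈ S, Φ k z * G z x := by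
    intro k x
    calc Φ (k+1) x
        = ∑ y ∈ hγ.toFinset,
            γ y * (matId' y x + ∑ z ∈ S, GradeAux.GS G hG hacyc (· ≤ k) y z * G z x) :=
          Finset.sum_congr rfl fun y _ => by rw [GradeAux.GS_le_succ]
      _ = ∑ y ∈ hγ.toFinset, (γ y * matId' y x
            + γ y * ∑ z ∈ S, GradeAux.GS G hG hacyc (· ≤ k) y z * G z x) := by
          simp_rw [mul_add]
      _ = (∑ y ∈ hγ.toFinset, γ y * matId' y x)
            + ∑ y ∈ hγ.toFinset, γ y * ∑ z ∈ S, GradeAux.GS G hG hacyc (· ≤ k) y z * G z x :=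
          Finset.sum_add_distrib
      _ = γ x + ∑ z ∈ S, Φ k z * G z x := by
          rw [GradeAux.sum_matId' γ hγ.toFinset (fun v hv => hγ.mem_toFinset.2 hv) x,
            GradeAux.sum_mul_sum_comm]
  have hψs : ∀ k x, ψ (k+1) x = ∑ z ∈ S, ψ k z * G z x := by
    intro k x
    calc ψ (k+1) x
        = ∑ y ∈ hγ'.toFinset, γ' y * GradeAux.GS G hG hacyc (· = k+2) y x :=
          Finset.sum_congr rfl fun y _ => by
            rw [GradeAux.GS_congr G hG hacyc (C := fun n => n = k+1+1) (C' := fun n => n = k+2)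
              (fun n => by omega)]
      _ = ∑ y ∈ hγ'.toFinset,
            γ' y * ∑ z ∈ S, GradeAux.GS G hG hacyc (· = k+1) y z * G z x :=
          Finset.sum_congr rfl fun y _ => by rw [GradeAux.GS_exact_succ]
      _ = ∑ z ∈ S, ψ k z * G z x := GradeAux.sum_mul_sum_comm _ _ _ _ _
  have hψK : ∀ x, ψ K x = 0 := by
    intro x
    refine Finset.sum_eq_zero fun y _ => ?_
    rw [GradeAux.GS_exact_vanish G hG hacyc (k := K) (by rw [← hS]; omega), mul_zero]
  have hctx : ∀ x, ∑ z ∈ S, γ' z * G z x = ctxMul γ' G x := by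
    intro x
    rw [ctxMul]
    refine (finsum_eq_finset_sum_of_support_subset _ ?_).symm
    intro z hz
    rw [Function.mem_support] at hz
    have hGz : G z x ≠ 0 := fun h0 => hz (by rw [h0, mul_zero])
    exact Finset.mem_coe.2 (GradeAux.fst_mem_eS G hG hGz)
  have key : ∀ k x, Φ k x + ψ k x ≤ γ' x := by
    intro k
    induction k with
    | zero => intro x; rw [hΦ0, hψ0, zero_add]
    | succ k ih =>
      intro x
      rw [hΦs, hψs]
      have e : γ x + ∑ z ∈ S, Φ k z * G z x + ∑ z ∈ S, ψ k z * G z x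
          = γ x + ∑ z ∈ S, (Φ k z + ψ k z) * G z x := by
        rw [add_assoc, ← Finset.sum_add_distrib]
        simp_rw [add_mul]
      rw [e]
      calc γ x + ∑ z ∈ S, (Φ k z + ψ k z) * G z x
          ≤ γ x + ∑ z ∈ S, γ' z * G z x :=
            hadd _ _ _ _ le_rfl
              (GradeAux.sum_le_sum' hadd S _ _ fun z _ => hmul _ _ _ _ (ih z) le_rfl)
        _ = γ x + ctxMul γ' G x := by rw [hctx]
        _ ≤ γ' x := h x
  intro x
  have h1 : ctxMul γ (gstar G) x = Φ K x := by
    rw [ctxMul]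
    rw [finsum_eq_finset_sum_of_support_subset _
      (s := hγ.toFinset) ?_]
    · exact Finset.sum_congr rfl fun y _ => by
        rw [GradeAux.gstar_eq G hG hacyc y x]
    · intro y hy
      rw [Function.mem_support] at hy
      have : γ y ≠ 0 := fun h0 => hy (by rw [h0, zero_mul])
      exact Finset.mem_coe.2 (hγ.mem_toFinset.2 this)
  rw [h1, ← add_zero (Φ K x), ← hψK x]
  exact key K x
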